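/- For every natural number n ≥ 1, Σ_{k=0}^{n} C(n,k) · (k/n)^k · ((n−k)/n)^{n−k} ≤ 2 + √(π n / 2), where C(n,k) is the binomial coefficient, the powers are natural powers of real numbers, and the summand is interpreted with 0^0 = 1 (so the k = 0 and k = n terms each equal 1). -/

import Mathlib

open Filter Finset Real Stirling Topology Nat

lemma BL.frac_eq (y : ℝ) (hy : 0 ≤ y) :
    (1/3 : ℝ) * ((1/(2*y+3))^2 * (1 - (1/(2*y+3))^2)⁻¹) = 1/(12*(y+1)) - 1/(12*(y+2)) := by
  have h1 : (2*y+3) ≠ 0 := by positivity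
  have h2' : (2*y+3)^2 - 1 ≠ 0 := by nlinarith
  have h2 : (1:ℝ) - (1/(2*y+3))^2 ≠ 0 := by
    have : ((1:ℝ)/(2*y+3))^2 < 1 := by
      rw [div_pow, one_pow, div_lt_one (by positivity)]; nlinarith
    linarith
  have h3 : (y+1) ≠ 0 := by positivity
  have h4 : (y+2) ≠ 0 := by positivity
  have h5 : (24 + y*36 + y^2*12 : ℝ) ≠ 0 := by positivity
  field_simp
  ring

lemma BL.log_diff_le (i : ℕ) :
    Real.log (stirlingSeq (i + 1)) - Real.log (stirlingSeq (i + 2)) ≤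
      1 / (12 * ((i:ℝ) + 1)) - 1 / (12 * ((i:ℝ) + 2)) := by
  have hx : ((1:ℝ) / (2 * ((i:ℝ) + 1) + 1)) ^ 2 < 1 := by
    rw [div_pow, one_pow, div_lt_one (by positivity)]
    nlinarith [Nat.cast_nonneg (α := ℝ) i]
  have hx0 : (0:ℝ) ≤ ((1:ℝ) / (2 * ((i:ℝ) + 1) + 1)) ^ 2 := sq_nonneg _
  have g : HasSum (fun k : ℕ => (1/3 : ℝ) * (((1:ℝ) / (2 * ((i:ℝ) + 1) + 1)) ^ 2) ^ (k + 1))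
      ((1/3 : ℝ) * (((1:ℝ) / (2 * ((i:ℝ) + 1) + 1)) ^ 2) * (1 - ((1:ℝ) / (2 * ((i:ℝ) + 1) + 1)) ^ 2)⁻¹) := by
    have h := (hasSum_geometric_of_lt_one hx0 hx).mul_left
      ((1/3 : ℝ) * (((1:ℝ) / (2 * ((i:ℝ) + 1) + 1)) ^ 2))
    have heq : (fun k : ℕ => (1/3 : ℝ) * (((1:ℝ) / (2 * ((i:ℝ) + 1) + 1)) ^ 2)
        * (((1:ℝ) / (2 * ((i:ℝ) + 1) + 1)) ^ 2) ^ k)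
        = fun k : ℕ => (1/3 : ℝ) * (((1:ℝ) / (2 * ((i:ℝ) + 1) + 1)) ^ 2) ^ (k + 1) := by
      funext k; rw [_root_.pow_succ']; ring
    rw [heq] at h
    exact h
  have hle : ∀ k : ℕ, (1 : ℝ) / (2 * ↑(k + 1) + 1) * ((1 / (2 * ↑(i + 1) + 1)) ^ 2) ^ (k + 1)
      ≤ (1/3 : ℝ) * (((1:ℝ) / (2 * ((i:ℝ) + 1) + 1)) ^ 2) ^ (k + 1) := by
    intro k
    have h1 : ((1:ℝ) / (2 * (↑k + 1) + 1)) ≤ 1/3 := by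
      rw [div_le_div_iff₀ (by positivity) (by norm_num)]
      nlinarith [Nat.cast_nonneg (α := ℝ) k]
    have h2 : (0:ℝ) ≤ (((1:ℝ) / (2 * ((i:ℝ) + 1) + 1)) ^ 2) ^ (k+1) := pow_nonneg hx0 _
    calc (1 : ℝ) / (2 * ↑(k + 1) + 1) * ((1 / (2 * ↑(i + 1) + 1)) ^ 2) ^ (k + 1)
        = (1 : ℝ) / (2 * ((k:ℝ) + 1) + 1) * (((1:ℝ) / (2 * ((i:ℝ) + 1) + 1)) ^ 2) ^ (k+1) := by
          push_cast; ring
      _ ≤ _ := mul_le_mul_of_nonneg_right h1 h2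
  have key := hasSum_le hle (log_stirlingSeq_diff_hasSum i) g
  refine key.trans (le_of_eq ?_)
  have h := BL.frac_eq (i:ℝ) (Nat.cast_nonneg i)
  calc (1/3 : ℝ) * (((1:ℝ) / (2 * ((i:ℝ) + 1) + 1)) ^ 2) * (1 - ((1:ℝ) / (2 * ((i:ℝ) + 1) + 1)) ^ 2)⁻¹
      = (1/3 : ℝ) * ((1/(2*(i:ℝ)+3))^2 * (1 - (1/(2*(i:ℝ)+3))^2)⁻¹) := by ring_nf
    _ = 1/(12*((i:ℝ)+1)) - 1/(12*((i:ℝ)+2)) := h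

lemma BL.seq_le (m : ℕ) (hm : 1 ≤ m) :
    stirlingSeq m ≤ Real.sqrt Real.pi * Real.exp (1 / (12 * m)) := by
  have hmono : Monotone (fun i : ℕ => Real.log (stirlingSeq (i + 1)) - 1 / (12 * ((i:ℝ) + 1))) := by
    apply monotone_nat_of_le_succ
    intro i
    have h := BL.log_diff_le i
    have e1 : ((i:ℝ) + 1 + 1) = (i:ℝ) + 2 := by ring
    simp only [Nat.cast_add, Nat.cast_one, e1]
    linarith
  have htend : Tendsto (fun i : ℕ => Real.log (stirlingSeq (i + 1)) - 1 / (12 * ((i:ℝ) + 1)))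
      atTop (𝓝 (Real.log (Real.sqrt Real.pi))) := by
    have h1 : Tendsto (fun i : ℕ => Real.log (stirlingSeq (i + 1))) atTop
        (𝓝 (Real.log (Real.sqrt Real.pi))) :=
      (tendsto_stirlingSeq_sqrt_pi.comp (tendsto_add_atTop_nat 1)).log (by positivity)
    have h2 : Tendsto (fun i : ℕ => (12 * ((i:ℝ) + 1))) atTop atTop := by
      apply tendsto_atTop_mono (fun i : ℕ => ?_) tendsto_natCast_atTop_atTop
      have : (0:ℝ) ≤ (i:ℝ) := Nat.cast_nonneg i
      linarith
    have h3 := h2.inv_tendsto_atTop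
    have h4 : Tendsto (fun i : ℕ => 1 / (12 * ((i:ℝ) + 1))) atTop (𝓝 0) := by
      refine h3.congr fun i => ?_
      simp only [Pi.inv_apply, one_div]
    simpa using h1.sub h4
  have hle := hmono.ge_of_tendsto htend (m - 1)
  have hm' : m - 1 + 1 = m := Nat.succ_pred_eq_of_pos hm
  rw [hm'] at hle
  have hpos : 0 < stirlingSeq m := by
    have := stirlingSeq'_pos (m - 1)
    rwa [hm'] at this
  have hcast : ((m - 1 : ℕ) : ℝ) + 1 = (m : ℝ) := by
    push_cast [Nat.cast_sub hm]; ring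
  rw [hcast] at hle
  have hlog : Real.log (stirlingSeq m) ≤ Real.log (Real.sqrt Real.pi) + 1 / (12 * (m:ℝ)) := by
    linarith
  calc stirlingSeq m = Real.exp (Real.log (stirlingSeq m)) := (Real.exp_log hpos).symm
    _ ≤ Real.exp (Real.log (Real.sqrt Real.pi) + 1 / (12 * (m:ℝ))) := Real.exp_le_exp.2 hlog
    _ = Real.sqrt Real.pi * Real.exp (1 / (12 * m)) := by
        rw [Real.exp_add, Real.exp_log (by positivity)]

lemma BL.seq_ge (m : ℕ) (hm : 1 ≤ m) : Real.sqrt Real.pi ≤ stirlingSeq m := by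
  have h := stirlingSeq'_antitone.le_of_tendsto
    (tendsto_stirlingSeq_sqrt_pi.comp (tendsto_add_atTop_nat 1)) (m - 1)
  have hm' : m - 1 + 1 = m := Nat.succ_pred_eq_of_pos hm
  simpa only [Function.comp_apply, Nat.succ_eq_add_one, hm'] using h

lemma BL.fact_ge (m : ℕ) (hm : 1 ≤ m) :
    Real.sqrt Real.pi * (Real.sqrt (2 * m) * ((m : ℝ) / Real.exp 1) ^ m) ≤ (m ! : ℝ) := by
  have hm0 : (0:ℝ) < m := by exact_mod_cast hm
  have hd : 0 < Real.sqrt (2 * (m:ℝ)) * ((m : ℝ) / Real.exp 1) ^ m := by positivity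
  have h := BL.seq_ge m hm
  rw [stirlingSeq, le_div_iff₀ hd] at h
  linarith

lemma BL.fact_le (m : ℕ) (hm : 1 ≤ m) :
    (m ! : ℝ) ≤ Real.sqrt Real.pi * Real.exp (1 / (12 * m)) *
      (Real.sqrt (2 * m) * ((m : ℝ) / Real.exp 1) ^ m) := by
  have hm0 : (0:ℝ) < m := by exact_mod_cast hm
  have hd : 0 < Real.sqrt (2 * (m:ℝ)) * ((m : ℝ) / Real.exp 1) ^ m := by positivity
  have h := BL.seq_le m hm
  rw [stirlingSeq, div_le_iff₀ hd] at h
  linarith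

lemma BL.alg (a b c d e E X Y K Mm N1 N2 : ℝ) (ha : a ≠ 0) (hb : b ≠ 0) (hc : c ≠ 0)
    (hd : d ≠ 0) (hX : X ≠ 0) (hY : Y ≠ 0) (hN1 : N1 ≠ 0) (hN2 : N2 ≠ 0) (hK : K ≠ 0)
    (hMm : Mm ≠ 0) :
    (a * E * (b * e * ((N1 * N2) / (X * Y)))) /
        ((a * (b * c * (K / X))) * (a * (b * d * (Mm / Y)))) * ((K / N1) * (Mm / N2))
      = E * (e / (b * a) * (1 / (c * d))) := by
  field_simp

lemma BL.term_le (n k : ℕ) (hk1 : 1 ≤ k) (hkn : k < n) :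
    (n.choose k : ℝ) * ((k : ℝ) / n) ^ k * (((n - k : ℕ) : ℝ) / n) ^ (n - k)
      ≤ Real.exp (1 / (12 * n)) * (Real.sqrt ((n:ℝ) / (2 * Real.pi)) *
          (1 / Real.sqrt ((k:ℝ) * ((n:ℝ) - (k:ℝ))))) := by
  set M : ℕ := n - k with hM
  have hM1 : 1 ≤ M := by omega
  have hkM : k + M = n := by omega
  have hk0 : (0:ℝ) < k := by exact_mod_cast hk1
  have hM0 : (0:ℝ) < M := by exact_mod_cast hM1
  have hn0 : (0:ℝ) < n := by
    have : 0 < n := by omega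
    exact_mod_cast this
  have hcastM : ((M:ℕ):ℝ) = (n:ℝ) - (k:ℝ) := by
    rw [hM]; push_cast [Nat.cast_sub hkn.le]; ring
  -- abbreviations
  set A : ℝ := Real.sqrt Real.pi * (Real.sqrt (2 * k) * ((k : ℝ) / Real.exp 1) ^ k) with hA
  set B : ℝ := Real.sqrt Real.pi * (Real.sqrt (2 * M) * ((M : ℝ) / Real.exp 1) ^ M) with hB
  set C : ℝ := Real.sqrt Real.pi * Real.exp (1 / (12 * n)) *
      (Real.sqrt (2 * n) * ((n : ℝ) / Real.exp 1) ^ n) with hC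
  have hA0 : 0 < A := by rw [hA]; positivity
  have hB0 : 0 < B := by rw [hB]; positivity
  have hC0 : 0 < C := by rw [hC]; positivity
  have hdiv : (n ! : ℝ) / ((k ! : ℝ) * (M ! : ℝ)) ≤ C / (A * B) :=
    div_le_div₀ hC0.le (BL.fact_le n (by omega)) (by positivity)
      (mul_le_mul (BL.fact_ge k hk1) (BL.fact_ge M hM1) hB0.le (Nat.cast_nonneg _))
  have hchoose : (n.choose k : ℝ) = (n ! : ℝ) / ((k ! : ℝ) * (M ! : ℝ)) := by
    rw [Nat.cast_choose ℝ hkn.le]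
  have hstep : (n.choose k : ℝ) * ((k : ℝ) / n) ^ k * (((n - k : ℕ) : ℝ) / n) ^ (n - k)
      ≤ C / (A * B) * (((k : ℝ) / n) ^ k * (((M : ℕ) : ℝ) / n) ^ M) := by
    rw [hchoose, mul_assoc]
    exact mul_le_mul_of_nonneg_right hdiv (by positivity)
  refine hstep.trans (le_of_eq ?_)
  -- now the algebraic identity
  have e2k : Real.sqrt (2 * (k:ℝ)) = Real.sqrt 2 * Real.sqrt k := Real.sqrt_mul (by norm_num) _
  have e2M : Real.sqrt (2 * (M:ℝ)) = Real.sqrt 2 * Real.sqrt M := Real.sqrt_mul (by norm_num) _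
  have e2n : Real.sqrt (2 * (n:ℝ)) = Real.sqrt 2 * Real.sqrt n := Real.sqrt_mul (by norm_num) _
  have epk : ((k:ℝ) / Real.exp 1) ^ k = (k:ℝ)^k / Real.exp k := by
    rw [div_pow, Real.exp_one_pow]
  have epM : ((M:ℝ) / Real.exp 1) ^ M = (M:ℝ)^M / Real.exp M := by
    rw [div_pow, Real.exp_one_pow]
  have epn : ((n:ℝ) / Real.exp 1) ^ n = ((n:ℝ)^k * (n:ℝ)^M) / (Real.exp k * Real.exp M) := by
    have hc : (k:ℝ) + (M:ℝ) = (n:ℝ) := by exact_mod_cast congrArg (Nat.cast (R:=ℝ)) hkM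
    rw [div_pow, Real.exp_one_pow, ← pow_add, hkM, ← Real.exp_add, hc]
  have ekn : ((k:ℝ) / n) ^ k = (k:ℝ)^k / (n:ℝ)^k := div_pow _ _ _
  have eMn : ((M:ℝ) / n) ^ M = (M:ℝ)^M / (n:ℝ)^M := div_pow _ _ _
  have esqr : Real.sqrt ((n:ℝ) / (2 * Real.pi)) = Real.sqrt n / (Real.sqrt 2 * Real.sqrt Real.pi) := by
    rw [Real.sqrt_div (Nat.cast_nonneg n), Real.sqrt_mul (by norm_num)]
  have ekM : Real.sqrt ((k:ℝ) * ((n:ℝ) - (k:ℝ))) = Real.sqrt k * Real.sqrt M := by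
    rw [← hcastM, Real.sqrt_mul (Nat.cast_nonneg k)]
  calc C / (A * B) * (((k : ℝ) / n) ^ k * (((M : ℕ) : ℝ) / n) ^ M)
      = (Real.sqrt Real.pi * Real.exp (1 / (12 * n)) *
          (Real.sqrt 2 * Real.sqrt n * (((n:ℝ)^k * (n:ℝ)^M) / (Real.exp k * Real.exp M)))) /
        ((Real.sqrt Real.pi * (Real.sqrt 2 * Real.sqrt k * ((k:ℝ)^k / Real.exp k))) *
          (Real.sqrt Real.pi * (Real.sqrt 2 * Real.sqrt M * ((M:ℝ)^M / Real.exp M)))) *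
        (((k:ℝ)^k / (n:ℝ)^k) * ((M:ℝ)^M / (n:ℝ)^M)) := by
        rw [hC, hA, hB]
        push_cast [e2k, e2M, e2n, epk, epM, epn, ekn, eMn]
        ring
    _ = Real.exp (1 / (12 * n)) * (Real.sqrt n / (Real.sqrt 2 * Real.sqrt Real.pi) *
          (1 / (Real.sqrt k * Real.sqrt M))) := by
        exact BL.alg (Real.sqrt Real.pi) (Real.sqrt 2) (Real.sqrt k) (Real.sqrt M)
          (Real.sqrt n) _ (Real.exp k) (Real.exp M) ((k:ℝ)^k) ((M:ℝ)^M) ((n:ℝ)^k) ((n:ℝ)^M)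
          (by positivity) (by positivity) (by positivity) (by positivity)
          (by positivity) (by positivity) (by positivity) (by positivity)
          (by positivity) (by positivity)
    _ = Real.exp (1 / (12 * n)) * (Real.sqrt ((n:ℝ) / (2 * Real.pi)) *
          (1 / Real.sqrt ((k:ℝ) * ((n:ℝ) - (k:ℝ))))) := by rw [esqr, ekM]

lemma BL.alg2 (a b c N : ℝ) (ha : a ≠ 0) (hb : b ≠ 0) (hc : c ≠ 0) (h : c * c = N) :
    2 * (1 / (b / c) * (1 / (2 * (a / c)) * (1 / N))) = 1 / (a * b) := by
  subst h; field_simp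

lemma BL.F_deriv (n : ℕ) (x : ℝ) (hx0 : 0 < x) (hxn : x < n) :
    HasDerivAt (fun y : ℝ => 2 * Real.arcsin (Real.sqrt (y / n)))
      (1 / Real.sqrt (x * ((n:ℝ) - x))) x := by
  have hn0 : (0:ℝ) < n := lt_trans hx0 hxn
  have h1 : HasDerivAt (fun y : ℝ => y / n) (1 / n) x := (hasDerivAt_id x).div_const _
  have hxn0 : (0:ℝ) < x / n := by positivity
  have h2 : HasDerivAt Real.sqrt (1 / (2 * Real.sqrt (x / n))) (x / n) :=
    Real.hasDerivAt_sqrt (ne_of_gt hxn0)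
  have h3 : HasDerivAt (fun y : ℝ => Real.sqrt (y / n)) (1 / (2 * Real.sqrt (x / n)) * (1 / n)) x :=
    h2.comp x h1
  have hlt1 : Real.sqrt (x / n) < 1 := by
    have : x / n < 1 := by rw [div_lt_one hn0]; exact hxn
    calc Real.sqrt (x / n) < Real.sqrt 1 := Real.sqrt_lt_sqrt hxn0.le this
      _ = 1 := Real.sqrt_one
  have h4 : HasDerivAt Real.arcsin (1 / Real.sqrt (1 - Real.sqrt (x / n) ^ 2))
      (Real.sqrt (x / n)) :=
    Real.hasDerivAt_arcsin (ne_of_gt (lt_of_lt_of_le (by norm_num) (Real.sqrt_nonneg _))) (ne_of_lt hlt1)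
  have h5' := (h4.comp x h3).const_mul 2
  have h5 : HasDerivAt (fun y : ℝ => 2 * Real.arcsin (Real.sqrt (y / n)))
      (2 * (1 / Real.sqrt (1 - Real.sqrt (x / n) ^ 2) * (1 / (2 * Real.sqrt (x / n)) * (1 / n)))) x :=
    h5'
  convert h5 using 1
  rw [Real.sq_sqrt hxn0.le]
  have e1 : (1:ℝ) - x / n = ((n:ℝ) - x) / n := by field_simp
  rw [e1, Real.sqrt_div (by linarith) (n:ℝ), Real.sqrt_div hx0.le (n:ℝ),
    Real.sqrt_mul hx0.le]
  exact (BL.alg2 (Real.sqrt x) (Real.sqrt ((n:ℝ) - x)) (Real.sqrt n) n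
    (ne_of_gt (Real.sqrt_pos.2 hx0)) (ne_of_gt (Real.sqrt_pos.2 (by linarith)))
    (ne_of_gt (Real.sqrt_pos.2 hn0)) (Real.mul_self_sqrt hn0.le)).symm

lemma BL.F_step (n : ℕ) (a : ℝ) (ha : 1 ≤ a) (hb : a + 1 ≤ n) :
    ∃ c ∈ Set.Ioo a (a + 1),
      2 * Real.arcsin (Real.sqrt ((a + 1) / n)) - 2 * Real.arcsin (Real.sqrt (a / n))
        = 1 / Real.sqrt (c * ((n:ℝ) - c)) := by
  have hcont : ContinuousOn (fun y : ℝ => 2 * Real.arcsin (Real.sqrt (y / n)))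
      (Set.Icc a (a + 1)) := by
    apply Continuous.continuousOn
    exact continuous_const.mul (Real.continuous_arcsin.comp
      (Real.continuous_sqrt.comp (continuous_id.div_const _)))
  have hderiv : ∀ x ∈ Set.Ioo a (a + 1),
      HasDerivAt (fun y : ℝ => 2 * Real.arcsin (Real.sqrt (y / n)))
        (1 / Real.sqrt (x * ((n:ℝ) - x))) x := by
    intro x hx
    exact BL.F_deriv n x (by linarith [hx.1]) (by linarith [hx.2])
  obtain ⟨c, hc, heq⟩ := exists_hasDerivAt_eq_slope _ _ (by linarith : a < a + 1) hcont hderiv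
  refine ⟨c, hc, ?_⟩
  have e : a + 1 - a = 1 := by ring
  rw [e, div_one] at heq
  exact heq.symm

lemma BL.step_left (n k : ℕ) (hk : 2 ≤ k) (h2k : 2 * k ≤ n) :
    1 / Real.sqrt ((k:ℝ) * ((n:ℝ) - k)) ≤
      2 * Real.arcsin (Real.sqrt ((k:ℝ) / n)) - 2 * Real.arcsin (Real.sqrt (((k:ℝ) - 1) / n)) := by
  have hk2 : (2:ℝ) ≤ k := by exact_mod_cast hk
  have h2k' : 2 * (k:ℝ) ≤ n := by exact_mod_cast h2k
  obtain ⟨c, hc, heq⟩ := BL.F_step n ((k:ℝ) - 1) (by linarith) (by linarith)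
  have e1 : (k:ℝ) - 1 + 1 = (k:ℝ) := by ring
  rw [e1] at heq
  rw [heq]
  have hc1 : (k:ℝ) - 1 < c := hc.1
  have hc2 : c < k := by have := hc.2; linarith
  have hpos : 0 < c * ((n:ℝ) - c) := by
    apply mul_pos (by linarith)
    nlinarith
  have hle : c * ((n:ℝ) - c) ≤ (k:ℝ) * ((n:ℝ) - k) := by nlinarith
  exact one_div_le_one_div_of_le (Real.sqrt_pos.2 hpos) (Real.sqrt_le_sqrt hle)

lemma BL.step_right (n k : ℕ) (h2k : n ≤ 2 * k) (hkn : k + 1 ≤ n) (hk1 : 1 ≤ k) :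
    1 / Real.sqrt ((k:ℝ) * ((n:ℝ) - k)) ≤
      2 * Real.arcsin (Real.sqrt (((k:ℝ) + 1) / n)) - 2 * Real.arcsin (Real.sqrt ((k:ℝ) / n)) := by
  have hk1' : (1:ℝ) ≤ k := by exact_mod_cast hk1
  have h2k' : (n:ℝ) ≤ 2 * k := by exact_mod_cast h2k
  have hkn' : (k:ℝ) + 1 ≤ n := by exact_mod_cast hkn
  obtain ⟨c, hc, heq⟩ := BL.F_step n (k:ℝ) hk1' hkn'
  rw [heq]
  have hc1 : (k:ℝ) < c := hc.1
  have hc2 : c < (k:ℝ) + 1 := hc.2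
  have hpos : 0 < c * ((n:ℝ) - c) := by
    apply mul_pos (by linarith)
    linarith
  have hle : c * ((n:ℝ) - c) ≤ (k:ℝ) * ((n:ℝ) - k) := by nlinarith
  exact one_div_le_one_div_of_le (Real.sqrt_pos.2 hpos) (Real.sqrt_le_sqrt hle)

lemma BL.sum_le (n : ℕ) (hn : 4 ≤ n) :
    ∑ j ∈ Finset.range (n - 3), (1:ℝ) / Real.sqrt (((j:ℝ) + 2) * ((n:ℝ) - ((j:ℝ) + 2)))
      ≤ Real.pi - 4 / Real.sqrt n := by
  have hn0 : (0:ℝ) < n := by positivity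
  set D : ℕ → ℝ := fun i => 2 * Real.arcsin (Real.sqrt ((i:ℝ) / n)) with hD
  set m : ℕ := n / 2 with hm
  have hm2 : 2 ≤ m := by omega
  have h2m : 2 * m ≤ n := by omega
  have hn2m : n ≤ 2 * m + 1 := by omega
  have hmn2 : m ≤ n - 2 := by omega
  have hsplit : n - 3 = (m - 1) + (n - 2 - m) := by omega
  rw [hsplit, Finset.sum_range_add]
  -- first half
  have h1 : ∑ j ∈ Finset.range (m - 1), (1:ℝ) / Real.sqrt (((j:ℝ) + 2) * ((n:ℝ) - ((j:ℝ) + 2)))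
      ≤ D m - D 1 := by
    have hb : ∀ j ∈ Finset.range (m - 1),
        (1:ℝ) / Real.sqrt (((j:ℝ) + 2) * ((n:ℝ) - ((j:ℝ) + 2)))
          ≤ (fun i => D (i + 1)) (j + 1) - (fun i => D (i + 1)) j := by
      intro j hj
      simp only [Finset.mem_range] at hj
      have h := BL.step_left n (j + 2) (by omega) (by omega)
      simp only [hD]
      push_cast at h ⊢
      convert h using 4 <;> push_cast <;> ring
    calc ∑ j ∈ Finset.range (m - 1), (1:ℝ) / Real.sqrt (((j:ℝ) + 2) * ((n:ℝ) - ((j:ℝ) + 2)))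
        ≤ ∑ j ∈ Finset.range (m - 1), ((fun i => D (i + 1)) (j + 1) - (fun i => D (i + 1)) j) :=
          Finset.sum_le_sum hb
      _ = D (m - 1 + 1) - D 1 := by rw [Finset.sum_range_sub (fun i => D (i + 1))]
      _ = D m - D 1 := by congr 2; omega
  -- second half
  have h2 : ∑ j ∈ Finset.range (n - 2 - m),
        (1:ℝ) / Real.sqrt ((((m - 1 + j : ℕ):ℝ) + 2) * ((n:ℝ) - (((m - 1 + j : ℕ):ℝ) + 2)))
      ≤ D (n - 1) - D (m + 1) := by
    have hb : ∀ j ∈ Finset.range (n - 2 - m),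
        (1:ℝ) / Real.sqrt ((((m - 1 + j : ℕ):ℝ) + 2) * ((n:ℝ) - (((m - 1 + j : ℕ):ℝ) + 2)))
          ≤ (fun i => D (m + 1 + i)) (j + 1) - (fun i => D (m + 1 + i)) j := by
      intro j hj
      simp only [Finset.mem_range] at hj
      have h := BL.step_right n (m + 1 + j) (by omega) (by omega) (by omega)
      simp only [hD]
      have e1 : ((m - 1 + j : ℕ):ℝ) + 2 = ((m + 1 + j : ℕ):ℝ) := by
        push_cast [Nat.cast_sub (by omega : 1 ≤ m)]; ring
      rw [e1]
      have e2 : m + 1 + (j + 1) = m + 1 + j + 1 := by omega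
      rw [e2]
      push_cast at h ⊢
      convert h using 4 <;> push_cast <;> ring
    calc ∑ j ∈ Finset.range (n - 2 - m),
          (1:ℝ) / Real.sqrt ((((m - 1 + j : ℕ):ℝ) + 2) * ((n:ℝ) - (((m - 1 + j : ℕ):ℝ) + 2)))
        ≤ ∑ j ∈ Finset.range (n - 2 - m),
            ((fun i => D (m + 1 + i)) (j + 1) - (fun i => D (m + 1 + i)) j) :=
          Finset.sum_le_sum hb
      _ = D (m + 1 + (n - 2 - m)) - D (m + 1 + 0) := by
          rw [Finset.sum_range_sub (fun i => D (m + 1 + i))]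
      _ = D (n - 1) - D (m + 1) := by congr 2 <;> omega
  -- monotonicity D m ≤ D (m+1)
  have hmono : D m ≤ D (m + 1) := by
    simp only [hD]
    have hc : ((m:ℕ):ℝ) / n ≤ ((m+1:ℕ):ℝ) / n := by
      gcongr
      push_cast; linarith
    exact mul_le_mul_of_nonneg_left (Real.monotone_arcsin (Real.sqrt_le_sqrt hc)) (by norm_num)
  -- endpoint bounds
  have hD1 : 2 / Real.sqrt n ≤ D 1 := by
    simp only [hD]
    have h0 : (0:ℝ) ≤ Real.sqrt ((1:ℝ)/n) := Real.sqrt_nonneg _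
    have harc : Real.sqrt ((1:ℝ)/n) ≤ Real.arcsin (Real.sqrt ((1:ℝ)/n)) := by
      have hle1 : Real.sqrt ((1:ℝ)/n) ≤ 1 := by
        rw [show Real.sqrt ((1:ℝ)/n) ≤ 1 ↔ (1:ℝ)/n ≤ 1 from Real.sqrt_le_one]
        rw [div_le_one hn0]
        have : (4:ℝ) ≤ n := by exact_mod_cast hn
        linarith
      have := Real.sin_le (Real.arcsin_nonneg.2 h0)
      rw [Real.sin_arcsin (by linarith) hle1] at this
      linarith
    have e : Real.sqrt ((1:ℝ)/n) = 1 / Real.sqrt n := by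
      rw [Real.sqrt_div (by norm_num), Real.sqrt_one]
    rw [e] at harc
    have e2 : 2 / Real.sqrt n = 2 * (1 / Real.sqrt n) := by ring
    push_cast
    rw [e]
    linarith
  have hDn1 : D (n - 1) ≤ Real.pi - 2 / Real.sqrt n := by
    simp only [hD]
    set y : ℝ := Real.sqrt (((n-1:ℕ):ℝ)/n) with hy
    have hy1 : y ≤ 1 := by
      rw [hy, show (1:ℝ) = Real.sqrt 1 by simp]
      apply Real.sqrt_le_sqrt
      rw [div_le_one hn0]
      push_cast [Nat.cast_sub (by omega : 1 ≤ n)]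
      linarith
    have hy0 : 0 ≤ y := Real.sqrt_nonneg _
    have harccos := Real.sin_le (Real.arccos_nonneg y)
    rw [Real.sin_arccos] at harccos
    have hysq : 1 - y ^ 2 = 1 / n := by
      rw [hy, Real.sq_sqrt (by positivity)]
      push_cast [Nat.cast_sub (by omega : 1 ≤ n)]
      field_simp
      ring
    rw [hysq] at harccos
    have e : Real.sqrt ((1:ℝ)/n) = 1 / Real.sqrt n := by
      rw [Real.sqrt_div (by norm_num), Real.sqrt_one]
    rw [e, Real.arccos] at harccos
    have e2 : 2 / Real.sqrt n = 2 * (1 / Real.sqrt n) := by ring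
    linarith
  have e4 : (4:ℝ) / Real.sqrt n = 2 / Real.sqrt n + 2 / Real.sqrt n := by ring
  linarith

lemma BL.pow_le (n : ℕ) (hn : 2 ≤ n) :
    (((n:ℝ) - 1) / n) ^ (n - 1) ≤ Real.exp (-(1:ℝ)/2) := by
  have hn0 : (0:ℝ) < n := by positivity
  have hn2 : (2:ℝ) ≤ n := by exact_mod_cast hn
  have hr0 : (0:ℝ) < ((n:ℝ) - 1) / n := by
    apply div_pos (by linarith) hn0
  have hlog : Real.log (((n:ℝ) - 1) / n) ≤ -1 / n := by
    have := Real.log_le_sub_one_of_pos hr0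
    have e : ((n:ℝ) - 1) / n - 1 = -1 / n := by field_simp; ring
    linarith [e ▸ this]
  have hm : ((n - 1 : ℕ) : ℝ) = (n:ℝ) - 1 := by
    push_cast [Nat.cast_sub (by omega : 1 ≤ n)]; ring
  have hkey : ((n - 1 : ℕ) : ℝ) * Real.log (((n:ℝ) - 1) / n) ≤ -(1:ℝ)/2 := by
    calc ((n - 1 : ℕ) : ℝ) * Real.log (((n:ℝ) - 1) / n)
        ≤ ((n - 1 : ℕ) : ℝ) * (-1 / n) :=
          mul_le_mul_of_nonneg_left hlog (Nat.cast_nonneg _)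
      _ = -(((n:ℝ) - 1) / n) := by rw [hm]; field_simp
      _ ≤ -(1:ℝ)/2 := by
          rw [neg_le, neg_div, neg_neg, le_div_iff₀ hn0]
          linarith
  have hpow : (0:ℝ) < (((n:ℝ) - 1) / n) ^ (n - 1) := pow_pos hr0 _
  calc (((n:ℝ) - 1) / n) ^ (n - 1) = Real.exp (Real.log ((((n:ℝ) - 1) / n) ^ (n - 1))) :=
        (Real.exp_log hpow).symm
    _ ≤ Real.exp (-(1:ℝ)/2) := by
        apply Real.exp_le_exp.2
        rw [Real.log_pow]
        exact hkey

lemma BL.exp_half : Real.exp (-(1:ℝ)/2) ≤ 0.6066 := by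
  have h1 : Real.exp (-(1:ℝ)/2) * Real.exp (-(1:ℝ)/2) = Real.exp (-1) := by
    rw [← Real.exp_add]; norm_num
  have h2 : Real.exp (-1:ℝ) = (Real.exp 1)⁻¹ := by
    rw [← Real.exp_neg]
  have h3 : (2.7182818283 : ℝ) < Real.exp 1 := Real.exp_one_gt_d9
  have h4 : Real.exp (-1:ℝ) ≤ 0.36788 := by
    rw [h2]
    rw [inv_le_comm₀ (by linarith) (by norm_num)]
    linarith
  nlinarith [Real.exp_pos (-(1:ℝ)/2)]

lemma BL.exp_twelfth (n : ℕ) (hn : 1 ≤ n) :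
    Real.exp (1 / (12 * (n:ℝ))) ≤ 1 + 1 / (11 * (n:ℝ)) := by
  have hn0 : (0:ℝ) < n := by positivity
  have hx1 : 1 / (12 * (n:ℝ)) ≤ 1/12 := by
    rw [div_le_div_iff₀ (by positivity) (by norm_num)]
    have : (1:ℝ) ≤ n := by exact_mod_cast hn
    nlinarith
  have hx0 : (0:ℝ) < 1 / (12 * (n:ℝ)) := by positivity
  have h2 : 1 - 1 / (12 * (n:ℝ)) ≤ Real.exp (-(1 / (12 * (n:ℝ)))) := by
    have := Real.add_one_le_exp (-(1 / (12 * (n:ℝ))))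
    linarith
  have h3 : Real.exp (1 / (12 * (n:ℝ))) * Real.exp (-(1 / (12 * (n:ℝ)))) = 1 := by
    rw [← Real.exp_add]; norm_num
  have hpos : (0:ℝ) < 1 - 1 / (12 * (n:ℝ)) := by linarith
  have hEx : Real.exp (1 / (12 * (n:ℝ))) * (1 - 1 / (12 * (n:ℝ))) ≤ 1 := by
    calc Real.exp (1 / (12 * (n:ℝ))) * (1 - 1 / (12 * (n:ℝ)))
        ≤ Real.exp (1 / (12 * (n:ℝ))) * Real.exp (-(1 / (12 * (n:ℝ)))) :=
          mul_le_mul_of_nonneg_left h2 (Real.exp_pos _).le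
      _ = 1 := h3
  have hone : (1:ℝ) ≤ (1 + 1 / (11 * (n:ℝ))) * (1 - 1 / (12 * (n:ℝ))) := by
    have h1n : (1:ℝ) ≤ n := by exact_mod_cast hn
    rw [← sub_nonneg]
    field_simp
    nlinarith
  have := hEx.trans hone
  exact le_of_mul_le_mul_right (by linarith [this]) hpos

set_option maxHeartbeats 1000000 in
/-- Upper bound on the exponentiated maximal leakage for `n` Bernoulli samples with
uniform prior on the bias:
`Σ_{k=0}^n C(n,k) (k/n)^k ((n−k)/n)^{n−k} ≤ 2 + √(πn/2)`. -/
theorem bernoulli_leakage_sum_le (n : ℕ) (hn : 1 ≤ n) :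
    ∑ k ∈ Finset.range (n + 1),
        (n.choose k : ℝ) * ((k : ℝ) / n) ^ k * (((n - k : ℕ) : ℝ) / n) ^ (n - k)
      ≤ 2 + Real.sqrt (Real.pi * n / 2) := by
  have hpi := Real.pi_gt_d6
  have hpi' := Real.pi_lt_d2
  -- small cases
  by_cases hsmall : n < 4
  · interval_cases n
    · have e : ∑ k ∈ Finset.range (1 + 1),
          ((1:ℕ).choose k : ℝ) * ((k : ℝ) / (1:ℕ)) ^ k *
            ((((1:ℕ) - k : ℕ) : ℝ) / (1:ℕ)) ^ ((1:ℕ) - k) = 2 := by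
        norm_num [Finset.sum_range_succ]
      rw [e]
      have h1 : (0:ℝ) ≤ Real.sqrt (Real.pi * ((1:ℕ):ℝ) / 2) := Real.sqrt_nonneg _
      linarith
    · have e : ∑ k ∈ Finset.range (2 + 1),
          ((2:ℕ).choose k : ℝ) * ((k : ℝ) / (2:ℕ)) ^ k *
            ((((2:ℕ) - k : ℕ) : ℝ) / (2:ℕ)) ^ ((2:ℕ) - k) = 5/2 := by
        norm_num [Finset.sum_range_succ]
      rw [e]
      have h0 : (0:ℝ) ≤ Real.pi * ((2:ℕ):ℝ) / 2 := by positivity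
      have h1 : (1/2:ℝ) ≤ Real.sqrt (Real.pi * ((2:ℕ):ℝ) / 2) := by
        nlinarith [Real.sq_sqrt h0, Real.sqrt_nonneg (Real.pi * ((2:ℕ):ℝ) / 2)]
      linarith
    · have e : ∑ k ∈ Finset.range (3 + 1),
          ((3:ℕ).choose k : ℝ) * ((k : ℝ) / (3:ℕ)) ^ k *
            ((((3:ℕ) - k : ℕ) : ℝ) / (3:ℕ)) ^ ((3:ℕ) - k) = 26/9 := by
        norm_num [Finset.sum_range_succ]
      rw [e]
      have h0 : (0:ℝ) ≤ Real.pi * ((3:ℕ):ℝ) / 2 := by positivity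
      have h1 : (8/9:ℝ) ≤ Real.sqrt (Real.pi * ((3:ℕ):ℝ) / 2) := by
        nlinarith [Real.sq_sqrt h0, Real.sqrt_nonneg (Real.pi * ((3:ℕ):ℝ) / 2)]
      linarith
  push_neg at hsmall
  obtain ⟨N, rfl⟩ : ∃ N, n = N + 4 := ⟨n - 4, by omega⟩
  set n : ℕ := N + 4 with hndef
  have hcastn : ((N + 4 : ℕ):ℝ) = (n:ℝ) := by rw [hndef]
  have hn4 : (4:ℝ) ≤ (n:ℝ) := by exact_mod_cast hsmall
  have hn0 : (0:ℝ) < n := by linarith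
  set t : ℕ → ℝ := fun k =>
    (n.choose k : ℝ) * ((k : ℝ) / n) ^ k * (((n - k : ℕ) : ℝ) / n) ^ (n - k) with ht
  have hdec : ∑ k ∈ Finset.range (n + 1), t k
      = t 0 + t 1 + (∑ i ∈ Finset.range (N + 1), t (i + 2)) + t (N + 3) + t (N + 4) := by
    show ∑ k ∈ Finset.range (N + 5), t k = _
    rw [Finset.sum_range_succ, Finset.sum_range_succ, Finset.sum_range_succ',
      Finset.sum_range_succ']
    ring
  rw [hdec]
  -- endpoint terms
  have ht0 : t 0 = 1 := by
    simp only [ht, Nat.choose_zero_right, Nat.cast_one, Nat.cast_zero, one_mul, pow_zero,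
      Nat.sub_zero, mul_one, zero_div]
    rw [div_self (ne_of_gt hn0), one_pow]
  have htn : t (N + 4) = 1 := by
    simp only [ht, Nat.choose_self, Nat.sub_self, Nat.cast_one, pow_zero, one_mul, mul_one]
    rw [show n.choose (N + 4) = 1 from Nat.choose_self n, show n - (N + 4) = 0 from Nat.sub_self n]
    simp only [Nat.cast_one, Nat.cast_zero, pow_zero, one_mul, mul_one]
    rw [hcastn, div_self (ne_of_gt hn0), one_pow]
  have hr : (((n - 1 : ℕ):ℝ)) = (n:ℝ) - 1 := by
    push_cast [Nat.cast_sub (by omega : 1 ≤ n)]; ring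
  have ht1 : t 1 ≤ Real.exp (-(1:ℝ)/2) := by
    have hb := BL.pow_le n (by omega)
    simp only [ht]
    rw [show n.choose 1 = n from Nat.choose_one_right n]
    calc (n:ℝ) * (((1:ℕ):ℝ) / n) ^ 1 * (((n - 1 : ℕ):ℝ) / n) ^ (n - 1)
        = (((n:ℝ) - 1) / n) ^ (n - 1) := by
          rw [hr]; push_cast; field_simp
      _ ≤ Real.exp (-(1:ℝ)/2) := hb
  have htn1 : t (N + 3) ≤ Real.exp (-(1:ℝ)/2) := by
    have hb := BL.pow_le n (by omega)
    simp only [ht]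
    have hch : n.choose (N + 3) = n := by
      have h1 : N + 3 = n - 1 := by omega
      rw [h1, Nat.choose_symm (by omega : 1 ≤ n), Nat.choose_one_right]
    rw [hch]
    have h2 : n - (N + 3) = 1 := by omega
    rw [h2]
    rw [show ((N + 3 : ℕ):ℝ) = (n:ℝ) - 1 from by rw [show N + 3 = n - 1 from by omega]; exact hr]
    rw [show N + 3 = n - 1 from by omega]
    have heq : (n:ℝ) * (((n:ℝ) - 1) / n) ^ (n - 1) * (((1:ℕ):ℝ) / n) ^ 1
        = (((n:ℝ) - 1) / n) ^ (n - 1) := by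
      push_cast
      field_simp
    rw [heq]
    exact hb
  -- interior sum
  set E : ℝ := Real.exp (1 / (12 * (n:ℝ))) with hE
  set u : ℝ := Real.sqrt ((n:ℝ) / (2 * Real.pi)) with hu
  have hint : ∑ i ∈ Finset.range (N + 1), t (i + 2)
      ≤ E * u * (Real.pi - 4 / Real.sqrt n) := by
    have hstep : ∀ i ∈ Finset.range (N + 1), t (i + 2)
        ≤ E * u * (1 / Real.sqrt ((((i:ℝ) + 2)) * ((n:ℝ) - ((i:ℝ) + 2)))) := by
      intro i hi
      simp only [Finset.mem_range] at hi
      have h := BL.term_le n (i + 2) (by omega) (by omega)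
      simp only [ht]
      have hc : ((i + 2 : ℕ):ℝ) = (i:ℝ) + 2 := by push_cast; ring
      calc (n.choose (i+2) : ℝ) * (((i+2:ℕ):ℝ) / n) ^ (i+2) *
            (((n - (i+2) : ℕ):ℝ) / n) ^ (n - (i+2))
          ≤ E * (u * (1 / Real.sqrt ((((i+2:ℕ)):ℝ) * ((n:ℝ) - (((i+2:ℕ)):ℝ))))) := h
        _ = E * u * (1 / Real.sqrt ((((i:ℝ) + 2)) * ((n:ℝ) - ((i:ℝ) + 2)))) := by
            rw [hc]; ring
    calc ∑ i ∈ Finset.range (N + 1), t (i + 2)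
        ≤ ∑ i ∈ Finset.range (N + 1),
            E * u * (1 / Real.sqrt ((((i:ℝ) + 2)) * ((n:ℝ) - ((i:ℝ) + 2)))) :=
          Finset.sum_le_sum hstep
      _ = E * u * ∑ i ∈ Finset.range (N + 1),
            (1:ℝ) / Real.sqrt ((((i:ℝ) + 2)) * ((n:ℝ) - ((i:ℝ) + 2))) := by
          rw [Finset.mul_sum]
      _ ≤ E * u * (Real.pi - 4 / Real.sqrt n) := by
          have hsum := BL.sum_le n (by omega)
          have hrange : n - 3 = N + 1 := by omega
          rw [hrange] at hsum
          have hEu : 0 ≤ E * u := by positivity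
          exact mul_le_mul_of_nonneg_left hsum hEu
  -- numeric endgame
  set s : ℝ := Real.sqrt n with hs
  have hs2 : (2:ℝ) ≤ s := by
    nlinarith [Real.sq_sqrt hn0.le, Real.sqrt_nonneg (n:ℝ)]
  have hss : s * s = (n:ℝ) := Real.mul_self_sqrt hn0.le
  set q : ℝ := Real.sqrt (2 * Real.pi) with hq
  have hq0 : (0:ℝ) ≤ 2 * Real.pi := by positivity
  have hq1 : (2.5:ℝ) ≤ q := by
    nlinarith [Real.sq_sqrt hq0, Real.sqrt_nonneg (2 * Real.pi)]
  have hq2 : q ≤ 2.51 := by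
    nlinarith [Real.sq_sqrt hq0, Real.sqrt_nonneg (2 * Real.pi)]
  have huq : u = s / q := by
    rw [hu, hs, hq, Real.sqrt_div (Nat.cast_nonneg n)]
  have hu0 : 0 ≤ u := Real.sqrt_nonneg _
  have hupi : u * Real.pi = Real.sqrt (Real.pi * n / 2) := by
    have e : Real.pi * (n:ℝ) / 2 = ((n:ℝ) / (2 * Real.pi)) * Real.pi ^ 2 := by
      field_simp
    rw [e, Real.sqrt_mul (by positivity), Real.sqrt_sq Real.pi_pos.le, hu]
  have hEb : E ≤ 1 + 1 / (11 * (n:ℝ)) := BL.exp_twelfth n (by omega)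
  have hE1 : (1:ℝ) ≤ E := by
    rw [hE, ← Real.exp_zero]
    apply Real.exp_le_exp.2
    positivity
  have hw := BL.exp_half
  have hwpos := Real.exp_pos (-(1:ℝ)/2)
  -- key numeric inequality
  have hkey : Real.exp (-(1:ℝ)/2) + E * u * (Real.pi - 4 / s) + Real.exp (-(1:ℝ)/2)
      ≤ u * Real.pi := by
    have hs0 : (0:ℝ) < s := by linarith
    have hq0' : (0:ℝ) < q := by linarith
    have hpos1 : (0:ℝ) ≤ Real.pi - 4 / s := by
      have : 4 / s ≤ 2 := by rw [div_le_iff₀ hs0]; linarith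
      linarith
    have step1 : E * u * (Real.pi - 4 / s) ≤ (1 + 1 / (11 * (n:ℝ))) * (u * (Real.pi - 4 / s)) := by
      rw [mul_assoc]
      exact mul_le_mul_of_nonneg_right hEb (by positivity)
    have step2 : (1 + 1 / (11 * (n:ℝ))) * (u * (Real.pi - 4 / s))
        = u * Real.pi - 4 * u / s + u * (Real.pi - 4 / s) / (11 * (n:ℝ)) := by ring
    have step3 : u * (Real.pi - 4 / s) / (11 * (n:ℝ)) ≤ u * Real.pi / (11 * (n:ℝ)) := by
      gcongr
      have : 0 ≤ 4 / s := by positivity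
      linarith
    have step4 : u * Real.pi / (11 * (n:ℝ)) ≤ 0.058 := by
      have hu1 : u * q = s := by rw [huq]; field_simp
      have hu2 : u ≤ s / 2.5 := by
        rw [le_div_iff₀ (by norm_num)]
        nlinarith
      have hmulpi : u * Real.pi ≤ (s / 2.5) * 3.15 :=
        mul_le_mul hu2 hpi'.le Real.pi_pos.le (by positivity)
      calc u * Real.pi / (11 * (n:ℝ)) ≤ (s / 2.5) * 3.15 / (11 * (n:ℝ)) := by
            gcongr
          _ = (s / 2.5) * 3.15 / (11 * (s * s)) := by rw [hss]
          _ = 3.15 / (2.5 * 11 * s) := by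
            field_simp
          _ ≤ 0.058 := by
            rw [div_le_iff₀ (by positivity)]
            nlinarith
    have step5 : 4 * u / s = 4 / q := by
      rw [huq]
      field_simp
    have step6 : (1.59:ℝ) ≤ 4 / q := by
      rw [le_div_iff₀ hq0']
      nlinarith
    nlinarith [step1, step2, step3, step4, step5, step6, hw, hwpos]
  rw [ht0, htn]
  linarith [ht1, htn1, hint, hkey, hupi]
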